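/- For every t ∈ [0,T) and every x < x* = μθ/(μ+r), it is not optimal to stop immediately in the problem defining V^{1,L}: one has the strict inequality V^{1,L}(t,x) > x. -/

import Mathlib

open MeasureTheory ProbabilityTheory Real Filter Set
open scoped NNReal ENNReal Topology

namespace OUSpread

variable {Ω : Type*} [MeasurableSpace Ω]

/-- Standard Brownian motion on `[0, ∞)` (indexed by `ℝ`). -/
structure IsStdBrownian (P : Measure Ω) (W : ℝ → Ω → ℝ) : Prop where
  measurable : ∀ t : ℝ, Measurable (W t)
  cont : ∀ ω, Continuous fun t => W t ω
  start : ∀ ω, W 0 ω = 0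
  gauss : ∀ s t : ℝ, 0 ≤ s → s ≤ t →
    Measure.map (fun ω => W t ω - W s ω) P = gaussianReal 0 (Real.toNNReal (t - s))
  indep : ∀ (n : ℕ) (t : Fin (n + 1) → ℝ), Monotone t → 0 ≤ t 0 →
    iIndepFun
      (fun i : Fin n => fun ω => W (t i.succ) ω - W (t i.castSucc) ω) P

/-- Mean of the OU process at time `s` started from `x`. -/
noncomputable def mOU (μ θ s x : ℝ) : ℝ := x * exp (-(μ * s)) + θ * (1 - exp (-(μ * s)))

/-- Variance of the OU process at time `s`. -/
noncomputable def varOU (μ σ s : ℝ) : ℝ := σ ^ 2 / (2 * μ) * (1 - exp (-(2 * μ * s)))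

/-- The time change turning Brownian motion into an OU process. -/
noncomputable def tc (μ s : ℝ) : ℝ := (exp (2 * μ * s) - 1) / (2 * μ)

/-- The OU process started at `x`, realized as a time-changed Brownian motion;
this is the strong solution of `dX = μ(θ - X) ds + σ dB`, `X_0 = x`. -/
noncomputable def X (μ σ θ : ℝ) (W : ℝ → Ω → ℝ) (x s : ℝ) (ω : Ω) : ℝ :=
  mOU μ θ s x + σ * exp (-(μ * s)) * W (tc μ s) ω

/-- Time-changed Brownian filtration `G_s = σ(W_u : 0 ≤ u ≤ tc μ s)`. -/
noncomputable def ouFilt (μ : ℝ) (W : ℝ → Ω → ℝ) (s : ℝ) : MeasurableSpace Ω :=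
  ⨆ u ∈ Set.Icc (0 : ℝ) (tc μ s), MeasurableSpace.comap (W u) inferInstance

/-- `τ` is a stopping time of the filtration `G`. -/
def IsStopTime (G : ℝ → MeasurableSpace Ω) (τ : Ω → ℝ) : Prop :=
  ∀ s : ℝ, MeasurableSet[G s] {ω | τ ω ≤ s}

noncomputable def H1L (μ θ r y : ℝ) : ℝ := -(μ + r) * y + μ * θ

/-- Value function of the long position: `V^{1,L}(t,x) = sup_{0 ≤ ζ ≤ T-t} E[e^{-rζ} X^x_ζ]`. -/
noncomputable def V1L (P : Measure Ω) (μ σ θ r T : ℝ) (W : ℝ → Ω → ℝ) (t x : ℝ) : ℝ :=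
  sSup {v : ℝ | ∃ ζ : Ω → ℝ, IsStopTime (ouFilt μ W) ζ ∧
    (∀ᵐ ω ∂P, ζ ω ∈ Set.Icc 0 (T - t)) ∧
    v = ∫ ω, exp (-(r * ζ ω)) * X μ σ θ W x (ζ ω) ω ∂P}


lemma sq_mul_exp_neg_le {c x : ℝ} (hc : 0 < c) : x ^ 2 * rexp (-(c * x ^ 2)) ≤ 1 / c := by
  have hy : c * x ^ 2 ≤ rexp (c * x ^ 2) := by linarith [Real.add_one_le_exp (c * x ^ 2)]
  have hpos := Real.exp_pos (c * x ^ 2)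
  rw [Real.exp_neg]
  calc x ^ 2 * (rexp (c * x ^ 2))⁻¹
      ≤ (rexp (c * x ^ 2) / c) * (rexp (c * x ^ 2))⁻¹ := by
        apply mul_le_mul_of_nonneg_right _ (by positivity)
        rw [le_div_iff₀ hc, mul_comm]; exact hy
    _ = 1 / c := by field_simp

lemma integrable_sq_mul_exp {b : ℝ} (hb : 0 < b) :
    Integrable (fun x : ℝ => x ^ 2 * rexp (-(b * x ^ 2))) := by
  have h := (integrable_exp_neg_mul_sq (half_pos hb)).const_mul (2 / b)
  refine h.mono ?_ (ae_of_all _ fun x => ?_)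
  · exact ((measurable_id.pow_const 2).mul
      ((measurable_id.pow_const 2).const_mul b).neg.exp).aestronglyMeasurable
  · have h1 : x ^ 2 * rexp (-(b * x ^ 2)) ≤ 2 / b * rexp (-(b / 2) * x ^ 2) := by
      have : rexp (-(b * x ^ 2)) = rexp (-(b / 2 * x ^ 2)) * rexp (-(b / 2 * x ^ 2)) := by
        rw [← Real.exp_add]; ring_nf
      rw [this, ← mul_assoc]
      have h2 := sq_mul_exp_neg_le (x := x) (half_pos hb)
      have h3 : (0:ℝ) < rexp (-(b / 2 * x ^ 2)) := Real.exp_pos _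
      calc x ^ 2 * rexp (-(b / 2 * x ^ 2)) * rexp (-(b / 2 * x ^ 2))
          ≤ (1 / (b / 2)) * rexp (-(b / 2 * x ^ 2)) := by
            apply mul_le_mul_of_nonneg_right h2 h3.le
        _ = 2 / b * rexp (-(b / 2) * x ^ 2) := by rw [one_div_div]; ring_nf
    have hnn : (0:ℝ) ≤ x ^ 2 * rexp (-(b * x ^ 2)) := by positivity
    rw [Real.norm_eq_abs, Real.norm_eq_abs, abs_of_nonneg hnn, abs_of_nonneg (by positivity)]
    exact h1

lemma integrable_id_mul_exp {b : ℝ} (hb : 0 < b) :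
    Integrable (fun x : ℝ => x * rexp (-(b * x ^ 2))) := by
  have h := (integrable_exp_neg_mul_sq hb).add (integrable_sq_mul_exp hb)
  refine h.mono ?_ (ae_of_all _ fun x => ?_)
  · exact (measurable_id.mul
      ((measurable_id.pow_const 2).const_mul b).neg.exp).aestronglyMeasurable
  · have he : (0:ℝ) < rexp (-(b * x ^ 2)) := Real.exp_pos _
    have : |x * rexp (-(b * x ^ 2))| = |x| * rexp (-(b * x ^ 2)) := by
      rw [abs_mul, abs_of_nonneg he.le]
    rw [Real.norm_eq_abs, Real.norm_eq_abs, this]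
    have habs : |x| ≤ 1 + x ^ 2 := by nlinarith [abs_nonneg x, sq_abs x]
    have h4 : |x| * rexp (-(b * x ^ 2)) ≤ (1 + x ^ 2) * rexp (-(b * x ^ 2)) :=
      mul_le_mul_of_nonneg_right habs he.le
    simp only [Pi.add_apply]
    rw [abs_of_nonneg (by positivity : (0:ℝ) ≤ rexp (-b * x ^ 2) + x ^ 2 * rexp (-(b * x ^ 2)))]
    calc |x| * rexp (-(b * x ^ 2)) ≤ (1 + x ^ 2) * rexp (-(b * x ^ 2)) := h4
      _ = rexp (-b * x ^ 2) + x ^ 2 * rexp (-(b * x ^ 2)) := by ring_nf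

lemma pdf_eq (v : ℝ≥0) (hv : v ≠ 0) (x : ℝ) :
    gaussianPDFReal 0 v x = (√(2 * π * v))⁻¹ * rexp (-(((2:ℝ) * v)⁻¹ * x ^ 2)) := by
  rw [gaussianPDFReal]
  congr 1
  rw [sub_zero]
  congr 1
  have hv' : (0:ℝ) < v := lt_of_le_of_ne v.coe_nonneg (by exact_mod_cast (Ne.symm hv))
  field_simp

lemma integrable_id_gaussianReal (v : ℝ≥0) :
    Integrable (fun x : ℝ => x) (gaussianReal 0 v) := by
  rcases eq_or_ne v 0 with h | h
  · rw [h, gaussianReal_zero_var]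
    refine (integrable_const (0:ℝ)).congr ?_
    rw [EventuallyEq, MeasureTheory.ae_dirac_eq]
    simp
  · rw [gaussianReal_of_var_ne_zero _ h]
    rw [gaussianPDF_def]
    rw [integrable_withDensity_iff ((measurable_gaussianPDFReal 0 v).ennreal_ofReal)
      (ae_of_all _ fun x => ENNReal.ofReal_lt_top)]
    have heq : (fun x : ℝ => x * (ENNReal.ofReal (gaussianPDFReal 0 v x)).toReal) =
        fun x : ℝ => (√(2 * π * v))⁻¹ * (x * rexp (-(((2:ℝ) * v)⁻¹ * x ^ 2))) := by
      funext x
      rw [ENNReal.toReal_ofReal (gaussianPDFReal_nonneg 0 v x), pdf_eq v h x]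
      ring
    rw [heq]
    have hb : (0:ℝ) < ((2:ℝ) * v)⁻¹ := by
      have hv' : (0:ℝ) < v := lt_of_le_of_ne v.coe_nonneg (by exact_mod_cast (Ne.symm h))
      positivity
    exact (integrable_id_mul_exp hb).const_mul _


lemma integrable_sq_gaussianReal (v : ℝ≥0) :
    Integrable (fun x : ℝ => x ^ 2) (gaussianReal 0 v) := by
  rcases eq_or_ne v 0 with h | h
  · rw [h, gaussianReal_zero_var]
    refine (integrable_const (0:ℝ)).congr ?_
    rw [EventuallyEq, MeasureTheory.ae_dirac_eq]
    simp
  · rw [gaussianReal_of_var_ne_zero _ h, gaussianPDF_def]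
    rw [integrable_withDensity_iff ((measurable_gaussianPDFReal 0 v).ennreal_ofReal)
      (ae_of_all _ fun x => ENNReal.ofReal_lt_top)]
    have heq : (fun x : ℝ => x ^ 2 * (ENNReal.ofReal (gaussianPDFReal 0 v x)).toReal) =
        fun x : ℝ => (√(2 * π * v))⁻¹ * (x ^ 2 * rexp (-(((2:ℝ) * v)⁻¹ * x ^ 2))) := by
      funext x
      rw [ENNReal.toReal_ofReal (gaussianPDFReal_nonneg 0 v x), pdf_eq v h x]
      ring
    rw [heq]
    have hb : (0:ℝ) < ((2:ℝ) * v)⁻¹ := by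
      have hv' : (0:ℝ) < v := lt_of_le_of_ne v.coe_nonneg (by exact_mod_cast (Ne.symm h))
      positivity
    exact (integrable_sq_mul_exp hb).const_mul _

lemma integral_id_gaussianReal (v : ℝ≥0) : ∫ x, x ∂(gaussianReal 0 v) = 0 := by
  have hmap : (gaussianReal 0 v).map (fun x => (-1 : ℝ) * x) = gaussianReal 0 v := by
    have h0 := gaussianReal_map_const_mul (μ := 0) (v := v) (-1)
    have h2 : (⟨(-1:ℝ)^2, sq_nonneg _⟩ : ℝ≥0) = 1 := by
      ext; norm_num
    rw [mul_zero] at h0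
    convert h0 using 2
    ext; simp
  have h1 : ∫ x, id x ∂(gaussianReal 0 v) = ∫ x, id ((-1:ℝ) * x) ∂(gaussianReal 0 v) := by
    conv_lhs => rw [← hmap]
    exact integral_map (by fun_prop) aestronglyMeasurable_id
  simp only [id, neg_one_mul] at h1
  rw [integral_neg] at h1
  linarith

lemma integral_sq_gaussianReal_le (v : ℝ≥0) :
    ∫ x, x ^ 2 ∂(gaussianReal 0 v) ≤ 8 * v := by
  rcases eq_or_ne v 0 with h | h
  · rw [h, gaussianReal_zero_var, integral_dirac]
    norm_num
  · have hv' : (0:ℝ) < v := lt_of_le_of_ne v.coe_nonneg (by exact_mod_cast (Ne.symm h))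
    rw [gaussianReal_of_var_ne_zero _ h]
    have hden : (volume.withDensity (gaussianPDF 0 v)) =
        volume.withDensity (fun x => ((gaussianPDFReal 0 v x).toNNReal : ℝ≥0∞)) := rfl
    rw [hden, integral_withDensity_eq_integral_smul
      ((measurable_gaussianPDFReal 0 v).real_toNNReal) (fun x => x ^ 2)]
    have heq : (fun x : ℝ => (gaussianPDFReal 0 v x).toNNReal • x ^ 2) =
        fun x : ℝ => (√(2 * π * v))⁻¹ * (x ^ 2 * rexp (-(((2:ℝ) * v)⁻¹ * x ^ 2))) := by
      funext x
      rw [NNReal.smul_def, smul_eq_mul, Real.coe_toNNReal _ (gaussianPDFReal_nonneg 0 v x),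
        pdf_eq v h x]
      ring
    rw [heq]
    set c := (√(2 * π * v))⁻¹ with hc
    have hcpos : 0 < c := by
      rw [hc]
      have : (0:ℝ) < 2 * π * v := by positivity
      positivity
    -- pointwise bound by c * (4v * exp(-(1/(4v)) x^2))
    have hb4 : (0:ℝ) < ((4:ℝ) * v)⁻¹ := by positivity
    have hpt : ∀ x : ℝ, c * (x ^ 2 * rexp (-(((2:ℝ) * v)⁻¹ * x ^ 2))) ≤
        c * ((4 * v) * rexp (-(((4:ℝ) * v)⁻¹ * x ^ 2))) := by
      intro x
      apply mul_le_mul_of_nonneg_left _ hcpos.le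
      have hsplit : rexp (-(((2:ℝ) * v)⁻¹ * x ^ 2)) =
          rexp (-(((4:ℝ) * v)⁻¹ * x ^ 2)) * rexp (-(((4:ℝ) * v)⁻¹ * x ^ 2)) := by
        rw [← Real.exp_add]
        congr 1
        field_simp
        ring
      rw [hsplit, ← mul_assoc]
      apply mul_le_mul_of_nonneg_right _ (Real.exp_pos _).le
      have := sq_mul_exp_neg_le (x := x) hb4
      rwa [one_div, inv_inv] at this
    have hint1 : Integrable (fun x : ℝ => c * (x ^ 2 * rexp (-(((2:ℝ) * v)⁻¹ * x ^ 2)))) := by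
      have hb : (0:ℝ) < ((2:ℝ) * v)⁻¹ := by positivity
      exact (integrable_sq_mul_exp hb).const_mul _
    have hint2 : Integrable (fun x : ℝ => c * ((4 * v) * rexp (-(((4:ℝ) * v)⁻¹ * x ^ 2)))) := by
      have h6 := (integrable_exp_neg_mul_sq hb4).const_mul (c * (4 * v))
      refine h6.congr (ae_of_all _ fun x => ?_)
      have h7 : (-((4:ℝ) * v)⁻¹ * x ^ 2) = (-(((4:ℝ) * v)⁻¹ * x ^ 2)) := by ring
      simp only [h7]
      ring
    have hmono := integral_mono hint1 hint2 hpt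
    refine hmono.trans ?_
    have h8 : ∫ x : ℝ, c * ((4 * v) * rexp (-(((4:ℝ) * v)⁻¹ * x ^ 2))) =
        c * (4 * v) * ∫ x : ℝ, rexp (-((4:ℝ) * v)⁻¹ * x ^ 2) := by
      rw [← integral_const_mul]
      congr 1
      funext x
      have h7 : (-((4:ℝ) * v)⁻¹ * x ^ 2) = (-(((4:ℝ) * v)⁻¹ * x ^ 2)) := by ring
      simp only [h7]
      ring
    rw [h8, integral_gaussian]
    -- c * (4v) * sqrt (π / (4v)⁻¹) ≤ 8 v
    have hπv : (0:ℝ) < 2 * π * v := by positivity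
    have hsqrt : √(π / ((4:ℝ) * v)⁻¹) = √2 * √(2 * π * v) := by
      rw [← Real.sqrt_mul (le_of_lt two_pos)]
      congr 1
      have h4v : (4 * (v:ℝ)) ≠ 0 := by positivity
      field_simp
      ring
    rw [hsqrt, hc]
    have hs2 : √(2 * π * v) > 0 := Real.sqrt_pos.mpr hπv
    have hsqrt2 : √2 ≤ 2 := by
      nlinarith [Real.sq_sqrt (by norm_num : (0:ℝ) ≤ 2), Real.sqrt_nonneg 2]
    calc (√(2 * π * v))⁻¹ * (4 * v) * (√2 * √(2 * π * v))
        = 4 * v * √2 := by field_simp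
      _ ≤ 4 * v * 2 := by nlinarith [hv']
      _ = 8 * v := by ring

/-- the dyadic running max at level `n` -/
noncomputable def dyMax (W : ℝ → Ω → ℝ) (U : ℝ) (n : ℕ) (ω : Ω) : ℝ :=
  (Finset.range (2 ^ n + 1)).sup' Finset.nonempty_range_add_one
    (fun k => |W (k * U / ((2 ^ n : ℕ) : ℝ)) ω|)

namespace IsStdBrownian

variable {P : Measure Ω} {W : ℝ → Ω → ℝ}

lemma integrable_incr (hW : IsStdBrownian P W) {a b : ℝ} (ha : 0 ≤ a) (hab : a ≤ b) :
    Integrable (fun ω => W b ω - W a ω) P := by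
  have hm : Measurable fun ω => W b ω - W a ω := (hW.measurable b).sub (hW.measurable a)
  have h := integrable_id_gaussianReal (Real.toNNReal (b - a))
  rw [← hW.gauss a b ha hab] at h
  exact (integrable_map_measure aestronglyMeasurable_id hm.aemeasurable).mp h

lemma integrable_sq_incr (hW : IsStdBrownian P W) {a b : ℝ} (ha : 0 ≤ a) (hab : a ≤ b) :
    Integrable (fun ω => (W b ω - W a ω) ^ 2) P := by
  have hm : Measurable fun ω => W b ω - W a ω := (hW.measurable b).sub (hW.measurable a)
  have h := integrable_sq_gaussianReal (Real.toNNReal (b - a))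
  rw [← hW.gauss a b ha hab] at h
  exact (integrable_map_measure (measurable_id.pow_const 2).aestronglyMeasurable
    hm.aemeasurable).mp h

lemma integral_incr_eq_zero (hW : IsStdBrownian P W) {a b : ℝ} (ha : 0 ≤ a) (hab : a ≤ b) :
    ∫ ω, (W b ω - W a ω) ∂P = 0 := by
  have hm : Measurable fun ω => W b ω - W a ω := (hW.measurable b).sub (hW.measurable a)
  have h := integral_id_gaussianReal (Real.toNNReal (b - a))
  rw [← hW.gauss a b ha hab, integral_map hm.aemeasurable (measurable_id' (α := ℝ)).aestronglyMeasurable] at h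
  simpa using h

lemma integral_sq_incr_le (hW : IsStdBrownian P W) {a b : ℝ} (ha : 0 ≤ a) (hab : a ≤ b) :
    ∫ ω, (W b ω - W a ω) ^ 2 ∂P ≤ 8 * (b - a) := by
  have hm : Measurable fun ω => W b ω - W a ω := (hW.measurable b).sub (hW.measurable a)
  have h := integral_sq_gaussianReal_le (Real.toNNReal (b - a))
  rw [← hW.gauss a b ha hab, integral_map hm.aemeasurable
    ((measurable_id' (α := ℝ)).pow_const 2).aestronglyMeasurable] at h
  rw [Real.coe_toNNReal _ (sub_nonneg.2 hab)] at h
  simpa using h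

lemma integrable_W (hW : IsStdBrownian P W) {u : ℝ} (hu : 0 ≤ u) : Integrable (W u) P := by
  have h := hW.integrable_incr le_rfl hu
  simpa [hW.start] using h

lemma integral_W_eq_zero (hW : IsStdBrownian P W) {u : ℝ} (hu : 0 ≤ u) : ∫ ω, W u ω ∂P = 0 := by
  have h := hW.integral_incr_eq_zero le_rfl hu
  simp only [hW.start, sub_zero] at h
  exact h

theorem integrable_sq_W (hW : IsStdBrownian P W) {u : ℝ} (hu : 0 ≤ u) :
    Integrable (fun ω => (W u ω) ^ 2) P := by
  have h := hW.integrable_sq_incr le_rfl hu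
  simpa [hW.start] using h

theorem integral_sq_W_le (hW : IsStdBrownian P W) {u : ℝ} (hu : 0 ≤ u) :
    ∫ ω, (W u ω) ^ 2 ∂P ≤ 8 * u := by
  have h := hW.integral_sq_incr_le le_rfl hu
  simp only [hW.start, sub_zero] at h
  exact h

theorem kolmogorov (hW : IsStdBrownian P W) [IsProbabilityMeasure P] {U : ℝ} (hU : 0 ≤ U)
    {N : ℕ} (hN : 0 < N) {ε : ℝ} (hε : 0 < ε) :
    P {ω | ε ≤ (Finset.range (N + 1)).sup' Finset.nonempty_range_add_one
        fun k => |W (k * U / N) ω|} ≤ ENNReal.ofReal (8 * U / ε ^ 2) := by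
  set s : ℕ → ℝ := fun k => k * U / N with hs
  have hs0 : s 0 = 0 := by simp [hs]
  have hNpos : (0:ℝ) < N := by exact_mod_cast hN
  have hsmono : Monotone s := by
    intro i j hij
    have h1 : (i : ℝ) ≤ (j : ℝ) := by exact_mod_cast hij
    show (i : ℝ) * U / N ≤ (j : ℝ) * U / N
    gcongr
  have hsnn : ∀ k, 0 ≤ s k := fun k => by
    show (0:ℝ) ≤ (k : ℝ) * U / N
    positivity
  set ξ : Fin N → Ω → ℝ := fun i ω => W (s ((i : ℕ) + 1)) ω - W (s (i : ℕ)) ω with hξ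
  have hξm : ∀ i, Measurable (ξ i) := fun i => (hW.measurable _).sub (hW.measurable _)
  have hindep : iIndepFun ξ P := by
    have h := hW.indep N (fun i : Fin (N + 1) => s (i : ℕ))
      (fun i j hij => hsmono (by exact_mod_cast hij)) (by simp [hs0])
    have heq : ξ = fun i : Fin N => fun ω =>
        W ((fun i : Fin (N + 1) => s (i : ℕ)) i.succ) ω -
          W ((fun i : Fin (N + 1) => s (i : ℕ)) i.castSucc) ω := by
      funext i ω
      simp [hξ]
    rw [heq]
    exact h
  -- telescoping
  have tele : ∀ b : ℕ, b ≤ N → ∀ a : ℕ, a ≤ b → ∀ ω : Ω,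
      (∑ i ∈ Finset.univ.filter (fun j : Fin N => a ≤ (j : ℕ) ∧ (j : ℕ) < b), ξ i ω)
        = W (s b) ω - W (s a) ω := by
    intro b
    induction b with
    | zero =>
      intro _ a ha ω
      interval_cases a
      rw [Finset.filter_false_of_mem (fun x _ => by omega), Finset.sum_empty, sub_self]
    | succ b ih =>
      intro hbN a hab ω
      rcases eq_or_lt_of_le hab with heq | hlt
      · rw [heq, Finset.filter_false_of_mem (fun x _ => by omega), Finset.sum_empty, sub_self]
      · have hbN' : b ≤ N := Nat.le_of_succ_le hbN
        have hbltN : b < N := hbN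
        have hins : Finset.univ.filter (fun j : Fin N => a ≤ (j : ℕ) ∧ (j : ℕ) < b + 1)
            = insert (⟨b, hbltN⟩ : Fin N)
              (Finset.univ.filter (fun j : Fin N => a ≤ (j : ℕ) ∧ (j : ℕ) < b)) := by
          ext j
          simp only [Finset.mem_filter, Finset.mem_insert, Finset.mem_univ, true_and,
            Fin.ext_iff]
          omega
        rw [hins, Finset.sum_insert (by simp only [Finset.mem_filter, Finset.mem_univ, true_and]; omega), ih hbN' a (Nat.lt_succ_iff.mp hlt) ω]
        show W (s (b + 1)) ω - W (s b) ω + (W (s b) ω - W (s a) ω) = _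
        ring
  have hSexpr : ∀ k : ℕ, k ≤ N → ∀ ω : Ω, W (s k) ω =
      ∑ i ∈ Finset.univ.filter (fun j : Fin N => 0 ≤ (j : ℕ) ∧ (j : ℕ) < k), ξ i ω := by
    intro k hk ω
    rw [tele k hk 0 (Nat.zero_le _) ω, hs0, hW.start, sub_zero]
  -- first-passage sets
  set A : ℕ → Set Ω := fun k =>
    {ω | ε ≤ |W (s k) ω| ∧ ∀ j < k, |W (s j) ω| < ε} with hA
  have hAmeas : ∀ k, MeasurableSet (A k) := by
    intro k
    have : A k = {ω | ε ≤ |W (s k) ω|} ∩ ⋂ (j : ℕ), ⋂ (_ : j < k), {ω | |W (s j) ω| < ε} := by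
      ext ω
      simp only [hA, Set.mem_setOf_eq, Set.mem_inter_iff, Set.mem_iInter]
    rw [this]
    exact (measurableSet_le measurable_const (hW.measurable _).abs).inter
      (MeasurableSet.iInter fun j => MeasurableSet.iInter fun _ =>
        measurableSet_lt (hW.measurable _).abs measurable_const)
  -- key estimate
  have hkey : ∀ k : ℕ, k ≤ N →
      ε ^ 2 * (P (A k)).toReal ≤ ∫ ω in A k, (W (s N) ω) ^ 2 ∂P := by
    intro k hk
    set Z : Ω → ℝ := (A k).indicator (fun ω => W (s k) ω) with hZ
    set D : Ω → ℝ := fun ω => W (s N) ω - W (s k) ω with hD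
    have hSkint : Integrable (W (s k)) P := hW.integrable_W (hsnn k)
    have hSk2int : Integrable (fun ω => (W (s k) ω) ^ 2) P := hW.integrable_sq_W (hsnn k)
    have hSN2int : Integrable (fun ω => (W (s N) ω) ^ 2) P := hW.integrable_sq_W (hsnn N)
    have hDint : Integrable D P := hW.integrable_incr (hsnn k) (hsmono hk)
    have hD2int : Integrable (fun ω => D ω ^ 2) P := hW.integrable_sq_incr (hsnn k) (hsmono hk)
    have hDzero : ∫ ω, D ω ∂P = 0 := hW.integral_incr_eq_zero (hsnn k) (hsmono hk)
    -- independence of Z and D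
    classical
    set Sl : Finset (Fin N) := Finset.univ.filter (fun j : Fin N => (j : ℕ) < k) with hSl
    set Tr : Finset (Fin N) := Finset.univ.filter (fun j : Fin N => k ≤ (j : ℕ)) with hTr
    have hdisj : Disjoint Sl Tr := by
      rw [Finset.disjoint_left]
      intro a haS haT
      simp only [hSl, hTr, Finset.mem_filter, Finset.mem_univ, true_and] at haS haT
      omega
    have hbase := hindep.indepFun_finset Sl Tr hdisj hξm
    set PS : ℕ → ((i : {x : Fin N // x ∈ Sl}) → ℝ) → ℝ :=
      fun j g => ∑ i : {x : Fin N // x ∈ Sl}, if ((i : Fin N) : ℕ) < j then g i else 0 with hPSdef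
    have hPSm : ∀ j, Measurable (PS j) := by
      intro j
      apply Finset.measurable_sum
      intro i _
      by_cases hij : ((i : Fin N) : ℕ) < j
      · simpa [hij] using measurable_pi_apply i
      · simpa [hij] using measurable_const
    have hPS : ∀ j : ℕ, j ≤ k → ∀ ω : Ω, PS j (fun i : {x : Fin N // x ∈ Sl} => ξ i ω)
        = W (s j) ω := by
      intro j hj ω
      rw [hSexpr j (hj.trans hk) ω]
      rw [hPSdef]
      dsimp only
      rw [Finset.sum_coe_sort Sl (fun x => if (x : ℕ) < j then ξ x ω else 0)]
      rw [← Finset.sum_filter]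
      apply Finset.sum_congr _ (fun _ _ => rfl)
      ext x
      simp only [hSl, Finset.mem_filter, Finset.mem_univ, true_and]
      omega
    set cond : ((i : {x : Fin N // x ∈ Sl}) → ℝ) → Prop :=
      fun g => ε ≤ |PS k g| ∧ ∀ j < k, |PS j g| < ε with hcond
    have hcondm : MeasurableSet {g | cond g} := by
      have : {g | cond g} = {g | ε ≤ |PS k g|} ∩
          ⋂ (j : ℕ), ⋂ (_ : j < k), {g | |PS j g| < ε} := by
        ext g
        simp only [hcond, Set.mem_setOf_eq, Set.mem_inter_iff, Set.mem_iInter]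
      rw [this]
      exact (measurableSet_le measurable_const (hPSm k).abs).inter
        (MeasurableSet.iInter fun j => MeasurableSet.iInter fun _ =>
          measurableSet_lt (hPSm j).abs measurable_const)
    set φ : ((i : {x : Fin N // x ∈ Sl}) → ℝ) → ℝ := Set.indicator {g | cond g} (PS k) with hφ
    have hφm : Measurable φ := (hPSm k).indicator hcondm
    set ψ : ((i : {x : Fin N // x ∈ Tr}) → ℝ) → ℝ := fun g => ∑ i : {x : Fin N // x ∈ Tr}, g i
      with hψ
    have hψm : Measurable ψ := Finset.measurable_sum _ (fun i _ => measurable_pi_apply i)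
    have hφeq : (fun ω => φ (fun i : {x : Fin N // x ∈ Sl} => ξ i ω)) = Z := by
      funext ω
      have hmemiff : cond (fun i : {x : Fin N // x ∈ Sl} => ξ i ω) ↔ ω ∈ A k := by
        constructor
        · rintro ⟨h1, h2⟩
          rw [hPS k le_rfl ω] at h1
          refine ⟨h1, fun j hj => ?_⟩
          have := h2 j hj
          rwa [hPS j hj.le ω] at this
        · rintro ⟨h1, h2⟩
          refine ⟨by rwa [hPS k le_rfl ω], fun j hj => ?_⟩
          rw [hPS j hj.le ω]
          exact h2 j hj
      by_cases hω : ω ∈ A k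
      · rw [hφ]
        rw [Set.indicator_of_mem (by simpa [Set.mem_setOf_eq] using hmemiff.mpr hω)]
        rw [hPS k le_rfl ω, hZ, Set.indicator_of_mem hω]
      · rw [hφ]
        rw [Set.indicator_of_notMem (by simpa [Set.mem_setOf_eq] using (fun h => hω (hmemiff.mp h)))]
        rw [hZ, Set.indicator_of_notMem hω]
    have hψeq : (fun ω => ψ (fun i : {x : Fin N // x ∈ Tr} => ξ i ω)) = D := by
      funext ω
      rw [hψ]
      dsimp only
      rw [Finset.sum_coe_sort Tr (fun x => ξ x ω)]
      show _ = W (s N) ω - W (s k) ω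
      rw [← tele N le_rfl k hk ω]
      apply Finset.sum_congr _ (fun _ _ => rfl)
      ext x
      simp only [hTr, Finset.mem_filter, Finset.mem_univ, true_and]
      exact ⟨fun h => ⟨h, x.isLt⟩, fun h => h.1⟩
    have hZD : IndepFun Z D P := by
      have h := hbase.comp hφm hψm
      rwa [show φ ∘ (fun a (i : {x : Fin N // x ∈ Sl}) => ξ i a)
          = (fun ω => φ (fun i : {x : Fin N // x ∈ Sl} => ξ i ω)) from rfl,
        show ψ ∘ (fun a (i : {x : Fin N // x ∈ Tr}) => ξ i a)
          = (fun ω => ψ (fun i : {x : Fin N // x ∈ Tr} => ξ i ω)) from rfl,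
        hφeq, hψeq] at h
    have hZint : Integrable Z P := hSkint.indicator (hAmeas k)
    have hZDint : Integrable (fun ω => Z ω * D ω) P := by
      have := hZD.integrable_mul hZint hDint
      exact this
    have hcross : ∫ ω, Z ω * D ω ∂P = 0 := by
      have h := hZD.integral_mul_eq_mul_integral hZint.aestronglyMeasurable hDint.aestronglyMeasurable
      calc ∫ ω, Z ω * D ω ∂P = (∫ ω, Z ω ∂P) * ∫ ω, D ω ∂P := h
        _ = 0 := by rw [hDzero, mul_zero]
    -- decomposition
    have hdecomp : (A k).indicator (fun ω => (W (s N) ω) ^ 2) =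
        fun ω => (A k).indicator (fun ω => (W (s k) ω) ^ 2) ω +
          (2 * (Z ω * D ω) + (A k).indicator (fun ω => D ω ^ 2) ω) := by
      funext ω
      by_cases hω : ω ∈ A k
      · simp only [Set.indicator_of_mem hω, hZ, hD]
        ring
      · simp only [Set.indicator_of_notMem hω, hZ, Set.indicator_of_notMem hω]
        ring
    have hIint1 : Integrable ((A k).indicator fun ω => (W (s k) ω) ^ 2) P :=
      hSk2int.indicator (hAmeas k)
    have hIint3 : Integrable ((A k).indicator fun ω => D ω ^ 2) P :=
      hD2int.indicator (hAmeas k)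
    have h2 : (∫ ω, (2 * (Z ω * D ω) + (A k).indicator (fun ω' => D ω' ^ 2) ω) ∂P)
        = (∫ ω, 2 * (Z ω * D ω) ∂P) + ∫ ω, (A k).indicator (fun ω' => D ω' ^ 2) ω ∂P :=
      integral_add (hZDint.const_mul 2) hIint3
    have h1 : (∫ ω, ((A k).indicator (fun ω' => (W (s k) ω') ^ 2) ω
          + (2 * (Z ω * D ω) + (A k).indicator (fun ω' => D ω' ^ 2) ω)) ∂P)
        = (∫ ω, (A k).indicator (fun ω' => (W (s k) ω') ^ 2) ω ∂P)
          + ∫ ω, (2 * (Z ω * D ω) + (A k).indicator (fun ω' => D ω' ^ 2) ω) ∂P :=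
      integral_add hIint1 ((hZDint.const_mul 2).add hIint3)
    have h0 : ∫ ω, (A k).indicator (fun ω' => (W (s N) ω') ^ 2) ω ∂P
        = ∫ ω, ((A k).indicator (fun ω' => (W (s k) ω') ^ 2) ω
          + (2 * (Z ω * D ω) + (A k).indicator (fun ω' => D ω' ^ 2) ω)) ∂P := by
      rw [hdecomp]
    have hsplit : ∫ ω, (A k).indicator (fun ω' => (W (s N) ω') ^ 2) ω ∂P
        = (∫ ω, (A k).indicator (fun ω' => (W (s k) ω') ^ 2) ω ∂P)
          + ((∫ ω, 2 * (Z ω * D ω) ∂P) + ∫ ω, (A k).indicator (fun ω' => D ω' ^ 2) ω ∂P) :=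
      h0.trans (h1.trans (by rw [h2]))
    have hIasint : ∫ ω in A k, (W (s N) ω) ^ 2 ∂P
        = ∫ ω, (A k).indicator (fun ω' => (W (s N) ω') ^ 2) ω ∂P :=
      (integral_indicator (hAmeas k)).symm
    have hindSk : ∫ ω, (A k).indicator (fun ω' => (W (s k) ω') ^ 2) ω ∂P
        = ∫ ω in A k, (W (s k) ω) ^ 2 ∂P := integral_indicator (hAmeas k)
    have h2cross : ∫ ω, 2 * (Z ω * D ω) ∂P = 0 := by
      rw [integral_const_mul, hcross, mul_zero]
    have hconst : ε ^ 2 * (P (A k)).toReal ≤ ∫ ω in A k, (W (s k) ω) ^ 2 ∂P := by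
      rw [mul_comm]
      show P.real (A k) • ε ^ 2 ≤ _
      apply setIntegral_ge_of_const_le (hAmeas k) (measure_ne_top P _)
      · intro ω hω
        have h1 : ε ≤ |W (s k) ω| := hω.1
        calc ε ^ 2 ≤ |W (s k) ω| ^ 2 := by
              apply pow_le_pow_left₀ hε.le h1
          _ = (W (s k) ω) ^ 2 := sq_abs _
      · exact hSk2int.integrableOn
    have hpos3 : 0 ≤ ∫ ω, (A k).indicator (fun ω' => D ω' ^ 2) ω ∂P :=
      integral_nonneg fun ω => Set.indicator_nonneg (fun ω _ => sq_nonneg _) ω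
    rw [hIasint, hsplit, h2cross, hindSk]
    linarith
  -- summation
  have hsubset : {ω | ε ≤ (Finset.range (N + 1)).sup' Finset.nonempty_range_add_one
      fun k => |W (s k) ω|} ⊆ ⋃ k ∈ Finset.range (N + 1), A k := by
    intro ω hω
    rw [Set.mem_setOf_eq, Finset.le_sup'_iff] at hω
    obtain ⟨b, hbmem, hb⟩ := hω
    have hex : ∃ k : ℕ, ε ≤ |W (s k) ω| := ⟨b, hb⟩
    have hk0le : Nat.find hex ≤ b := Nat.find_min' hex hb
    have hbN : b ≤ N := Nat.lt_succ_iff.mp (Finset.mem_range.mp hbmem)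
    refine Set.mem_biUnion (Finset.mem_range.mpr (Nat.lt_succ_iff.mpr (hk0le.trans hbN))) ?_
    exact ⟨Nat.find_spec hex, fun j hj => not_le.mp (Nat.find_min hex hj)⟩
  have hpd : (↑(Finset.range (N + 1)) : Set ℕ).Pairwise (Function.onFun Disjoint A) := by
    intro i _ j _ hij
    rw [Function.onFun, Set.disjoint_left]
    intro ω hωi hωj
    rcases Nat.lt_or_ge i j with h | h
    · exact absurd hωi.1 (not_le.mpr (hωj.2 i h))
    · have hji : j < i := by omega
      exact absurd hωj.1 (not_le.mpr (hωi.2 j hji))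
  have hSN2int : Integrable (fun ω => (W (s N) ω) ^ 2) P := hW.integrable_sq_W (hsnn N)
  have hsum : ε ^ 2 * (P (⋃ k ∈ Finset.range (N + 1), A k)).toReal ≤ 8 * U := by
    rw [measure_biUnion_finset hpd (fun k _ => hAmeas k)]
    rw [ENNReal.toReal_sum (fun k _ => measure_ne_top P _)]
    rw [Finset.mul_sum]
    calc ∑ k ∈ Finset.range (N + 1), ε ^ 2 * (P (A k)).toReal
        ≤ ∑ k ∈ Finset.range (N + 1), ∫ ω in A k, (W (s N) ω) ^ 2 ∂P := by
          apply Finset.sum_le_sum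
          intro k hkmem
          exact hkey k (Nat.lt_succ_iff.mp (Finset.mem_range.mp hkmem))
      _ = ∫ ω in ⋃ k ∈ Finset.range (N + 1), A k, (W (s N) ω) ^ 2 ∂P := by
          rw [integral_biUnion_finset _ (fun k _ => hAmeas k) hpd
            (fun k _ => hSN2int.integrableOn)]
      _ ≤ ∫ ω, (W (s N) ω) ^ 2 ∂P := by
          apply setIntegral_le_integral hSN2int
          exact ae_of_all _ fun ω => sq_nonneg _
      _ ≤ 8 * s N := hW.integral_sq_W_le (hsnn N)
      _ = 8 * U := by
          have hsN : s N = U := by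
            show (N : ℝ) * U / N = U
            field_simp
          rw [hsN]
  have hfinal : P (⋃ k ∈ Finset.range (N + 1), A k) ≤ ENNReal.ofReal (8 * U / ε ^ 2) := by
    have htr : (P (⋃ k ∈ Finset.range (N + 1), A k)).toReal ≤ 8 * U / ε ^ 2 := by
      rw [le_div_iff₀ (by positivity)]
      linarith [hsum]
    calc P (⋃ k ∈ Finset.range (N + 1), A k)
        = ENNReal.ofReal (P (⋃ k ∈ Finset.range (N + 1), A k)).toReal :=
          (ENNReal.ofReal_toReal (measure_ne_top P _)).symm
      _ ≤ ENNReal.ofReal (8 * U / ε ^ 2) := ENNReal.ofReal_le_ofReal htr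
  exact (measure_mono hsubset).trans hfinal

lemma measurable_dyMax (hW : IsStdBrownian P W) (U : ℝ) (n : ℕ) :
    Measurable (dyMax W U n) :=
  Finset.measurable_range_sup'' (fun k _ => (hW.measurable _).abs)

lemma dyMax_nonneg (U : ℝ) (n : ℕ) (ω : Ω) : 0 ≤ dyMax W U n ω := by
  have h0 : (0 : ℕ) ∈ Finset.range (2 ^ n + 1) := Finset.mem_range.mpr (by positivity)
  simp only [dyMax]
  exact (abs_nonneg _).trans (Finset.le_sup' (fun k : ℕ => |W ((k : ℝ) * U / ((2 ^ n : ℕ) : ℝ)) ω|) h0)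

lemma dyMax_mono (U : ℝ) (ω : Ω) : Monotone (fun n => dyMax W U n ω) := by
  apply monotone_nat_of_le_succ
  intro n
  simp only [dyMax]
  apply Finset.sup'_le
  intro k hk
  have hk' : k ≤ 2 ^ n := Nat.lt_succ_iff.mp (Finset.mem_range.mp hk)
  have hmem : 2 * k ∈ Finset.range (2 ^ (n + 1) + 1) := by
    rw [Finset.mem_range]
    have : 2 * k ≤ 2 ^ (n + 1) := by
      rw [pow_succ]
      omega
    omega
  have htime : (k : ℝ) * U / ((2 ^ n : ℕ) : ℝ) = ((2 * k : ℕ) : ℝ) * U / ((2 ^ (n + 1) : ℕ) : ℝ) := by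
    push_cast
    rw [pow_succ]
    have h2n : ((2 : ℝ) ^ n) ≠ 0 := by positivity
    field_simp
  rw [htime]
  exact Finset.le_sup' (fun k : ℕ => |W ((k : ℝ) * U / ((2 ^ (n + 1) : ℕ) : ℝ)) ω|) hmem

lemma lintegral_dyMax_le (hW : IsStdBrownian P W) [IsProbabilityMeasure P] {U : ℝ}
    (hU : 0 < U) (n : ℕ) :
    ∫⁻ ω, ENNReal.ofReal (dyMax W U n ω) ∂P ≤
      ENNReal.ofReal (√(8 * U) + 8 * U / √(8 * U)) := by
  have hMm : Measurable (dyMax W U n) := hW.measurable_dyMax U n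
  rw [lintegral_eq_lintegral_meas_lt P (ae_of_all _ (dyMax_nonneg U n)) hMm.aemeasurable]
  set a := √(8 * U) with ha
  have hapos : 0 < a := by rw [ha]; positivity
  have hsplit : (Set.Ioi (0 : ℝ)) = Set.Ioc 0 a ∪ Set.Ioi a :=
    (Set.Ioc_union_Ioi_eq_Ioi hapos.le).symm
  rw [hsplit, lintegral_union measurableSet_Ioi (Set.Ioc_disjoint_Ioi le_rfl)]
  have hIoc : ∫⁻ t in Set.Ioc 0 a, P {ω | t < dyMax W U n ω} ≤ ENNReal.ofReal a := by
    calc ∫⁻ t in Set.Ioc 0 a, P {ω | t < dyMax W U n ω}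
        ≤ ∫⁻ _ in Set.Ioc 0 a, 1 := lintegral_mono (fun t => prob_le_one)
      _ = volume (Set.Ioc 0 a) := setLIntegral_one _
      _ = ENNReal.ofReal a := by rw [Real.volume_Ioc, sub_zero]
  have hIoi : ∫⁻ t in Set.Ioi a, P {ω | t < dyMax W U n ω} ≤ ENNReal.ofReal (8 * U / a) := by
    have hbd : ∀ t ∈ Set.Ioi a, P {ω | t < dyMax W U n ω} ≤ ENNReal.ofReal (8 * U / t ^ 2) := by
      intro t ht
      have htpos : 0 < t := hapos.trans ht
      have hsub : {ω | t < dyMax W U n ω} ⊆ {ω | t ≤ dyMax W U n ω} :=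
        fun ω h => show t ≤ dyMax W U n ω from le_of_lt h
      refine (measure_mono hsub).trans ?_
      have hkol := hW.kolmogorov (U := U) hU.le (pow_pos two_pos n) htpos
      simp only [dyMax]
      exact hkol
    have hint : IntegrableOn (fun t : ℝ => 8 * U / t ^ 2) (Set.Ioi a) := by
      have h1 : IntegrableOn (fun t : ℝ => t ^ (-2 : ℝ)) (Set.Ioi a) :=
        integrableOn_Ioi_rpow_of_lt (by norm_num) hapos
      refine MeasureTheory.IntegrableOn.congr_fun (h1.const_mul (8 * U))
        (fun t ht => ?_) measurableSet_Ioi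
      have htpos : 0 < t := hapos.trans ht
      rw [Real.rpow_neg htpos.le, div_eq_mul_inv]
      congr 2
      rw [show ((2:ℝ) = ((2:ℕ):ℝ)) by norm_num, Real.rpow_natCast]
    calc ∫⁻ t in Set.Ioi a, P {ω | t < dyMax W U n ω}
        ≤ ∫⁻ t in Set.Ioi a, ENNReal.ofReal (8 * U / t ^ 2) := by
          apply setLIntegral_mono (by fun_prop) hbd
      _ = ENNReal.ofReal (∫ t in Set.Ioi a, 8 * U / t ^ 2) := by
          rw [← ofReal_integral_eq_lintegral_ofReal hint]
          exact ae_of_all _ fun t => by positivity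
      _ ≤ ENNReal.ofReal (8 * U / a) := by
          apply ENNReal.ofReal_le_ofReal
          have hval : ∫ t in Set.Ioi a, 8 * U / t ^ 2 = 8 * U * a⁻¹ := by
            have hc : ∀ t ∈ Set.Ioi a, 8 * U / t ^ 2 = 8 * U * t ^ (-2 : ℝ) := by
              intro t ht
              have htpos : 0 < t := hapos.trans ht
              rw [Real.rpow_neg htpos.le, div_eq_mul_inv]
              congr 2
              rw [show ((2:ℝ) = ((2:ℕ):ℝ)) by norm_num, Real.rpow_natCast]
            rw [setIntegral_congr_fun measurableSet_Ioi hc, integral_const_mul,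
              integral_Ioi_rpow_of_lt (by norm_num) hapos]
            norm_num [Real.rpow_neg_one]
          rw [hval, div_eq_mul_inv]
  calc (∫⁻ t in Set.Ioc 0 a, P {ω | t < dyMax W U n ω}) +
        ∫⁻ t in Set.Ioi a, P {ω | t < dyMax W U n ω}
      ≤ ENNReal.ofReal a + ENNReal.ofReal (8 * U / a) := add_le_add hIoc hIoi
    _ = ENNReal.ofReal (a + 8 * U / a) := by
        rw [← ENNReal.ofReal_add hapos.le (by positivity)]
    _ = ENNReal.ofReal (√(8 * U) + 8 * U / √(8 * U)) := by rw [ha]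

lemma lintegral_iSup_dyMax_le (hW : IsStdBrownian P W) [IsProbabilityMeasure P] {U : ℝ}
    (hU : 0 < U) :
    ∫⁻ ω, (⨆ n : ℕ, ENNReal.ofReal (dyMax W U n ω)) ∂P ≤
      ENNReal.ofReal (√(8 * U) + 8 * U / √(8 * U)) := by
  rw [lintegral_iSup (fun n => (hW.measurable_dyMax U n).ennreal_ofReal)
    (fun n m hnm => fun ω => ENNReal.ofReal_le_ofReal (dyMax_mono U ω hnm))]
  exact iSup_le fun n => hW.lintegral_dyMax_le hU n

lemma ofReal_abs_le_iSup_dyMax (hW : IsStdBrownian P W) {U u : ℝ} (hU : 0 < U)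
    (hu : u ∈ Set.Icc 0 U) (ω : Ω) :
    ENNReal.ofReal |W u ω| ≤ ⨆ n : ℕ, ENNReal.ofReal (dyMax W U n ω) := by
  obtain ⟨hu0, huU⟩ := hu
  set kn : ℕ → ℕ := fun n => ⌊u * ((2 ^ n : ℕ) : ℝ) / U⌋₊ with hkn
  set tn : ℕ → ℝ := fun n => (kn n : ℝ) * U / ((2 ^ n : ℕ) : ℝ) with htn
  have h2n : ∀ n : ℕ, (0:ℝ) < ((2 ^ n : ℕ) : ℝ) := fun n => by positivity
  have hknle : ∀ n, kn n ≤ 2 ^ n := by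
    intro n
    have h1 : u * ((2 ^ n : ℕ) : ℝ) / U ≤ ((2 ^ n : ℕ) : ℝ) := by
      rw [div_le_iff₀ hU]
      nlinarith [h2n n]
    calc kn n ≤ ⌊(((2 ^ n : ℕ) : ℝ))⌋₊ := Nat.floor_mono h1
      _ = 2 ^ n := Nat.floor_natCast _
  have htnle : ∀ n, tn n ≤ u := by
    intro n
    have h1 : (kn n : ℝ) ≤ u * ((2 ^ n : ℕ) : ℝ) / U := Nat.floor_le (by positivity)
    rw [htn]
    dsimp only
    rw [div_le_iff₀ (h2n n)]
    calc (kn n : ℝ) * U ≤ (u * ((2 ^ n : ℕ) : ℝ) / U) * U := by nlinarith [hU]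
      _ = u * ((2 ^ n : ℕ) : ℝ) := by field_simp
  have htnup : ∀ n, u - tn n ≤ U / ((2 ^ n : ℕ) : ℝ) := by
    intro n
    have h1 : u * ((2 ^ n : ℕ) : ℝ) / U < (kn n : ℝ) + 1 := Nat.lt_floor_add_one _
    have h2 : u * ((2 ^ n : ℕ) : ℝ) < ((kn n : ℝ) + 1) * U := by
      rw [div_lt_iff₀ hU] at h1
      linarith
    rw [htn]
    dsimp only
    rw [sub_le_iff_le_add, ← add_div, le_div_iff₀ (h2n n)]
    nlinarith [h2]
  have htendsto : Tendsto tn atTop (𝓝 u) := by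
    rw [tendsto_iff_dist_tendsto_zero]
    have hb : Tendsto (fun n : ℕ => U * (2⁻¹ : ℝ) ^ n) atTop (𝓝 (U * 0)) :=
      (tendsto_pow_atTop_nhds_zero_of_lt_one (by norm_num) (by norm_num)).const_mul U
    rw [mul_zero] at hb
    apply squeeze_zero (fun n => dist_nonneg) _ hb
    intro n
    rw [Real.dist_eq, abs_of_nonpos (by linarith [htnle n]), neg_sub]
    calc u - tn n ≤ U / ((2 ^ n : ℕ) : ℝ) := htnup n
      _ = U * (2⁻¹ : ℝ) ^ n := by
          push_cast
          rw [div_eq_mul_inv, inv_pow]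
  have hWcont : Tendsto (fun n => ENNReal.ofReal (|W (tn n) ω|)) atTop
      (𝓝 (ENNReal.ofReal (|W u ω|))) := by
    apply (ENNReal.continuous_ofReal.tendsto _).comp
    have h1 : Tendsto (fun n => W (tn n) ω) atTop (𝓝 (W u ω)) :=
      ((hW.cont ω).continuousAt.tendsto).comp htendsto
    exact (continuous_abs.tendsto _).comp h1
  apply le_of_tendsto hWcont
  apply Eventually.of_forall
  intro n
  have hmem : kn n ∈ Finset.range (2 ^ n + 1) := Finset.mem_range.mpr (by
    have := hknle n; omega)
  have h1 : |W (tn n) ω| ≤ dyMax W U n ω := by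
    simp only [dyMax]
    exact Finset.le_sup' (fun k : ℕ => |W ((k : ℝ) * U / ((2 ^ n : ℕ) : ℝ)) ω|) hmem
  exact le_trans (ENNReal.ofReal_le_ofReal h1) (le_iSup (fun n => ENNReal.ofReal (dyMax W U n ω)) n)

end IsStdBrownian

lemma tc_nonneg {μ s : ℝ} (hμ : 0 < μ) (hs : 0 ≤ s) : 0 ≤ tc μ s := by
  rw [tc]
  apply div_nonneg _ (by positivity)
  rw [sub_nonneg]
  calc (1:ℝ) = exp 0 := Real.exp_zero.symm
    _ ≤ exp (2 * μ * s) := Real.exp_le_exp.mpr (by positivity)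

lemma tc_mono {μ s1 s2 : ℝ} (hμ : 0 < μ) (h : s1 ≤ s2) : tc μ s1 ≤ tc μ s2 := by
  rw [tc, tc]
  rw [div_le_div_iff_of_pos_right (by positivity)]
  have := Real.exp_le_exp.mpr (show 2 * μ * s1 ≤ 2 * μ * s2 by nlinarith)
  linarith

lemma integral_payoff_le (P : Measure Ω) [IsProbabilityMeasure P]
    {μ σ θ r T t x : ℝ} (hμ : 0 < μ) (hσ : 0 < σ) (hr : 0 < r) (hTt : 0 < T - t)
    {W : ℝ → Ω → ℝ} (hW : IsStdBrownian P W) (ζ : Ω → ℝ)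
    (hζae : ∀ᵐ ω ∂P, ζ ω ∈ Set.Icc 0 (T - t)) :
    ∫ ω, exp (-(r * ζ ω)) * X μ σ θ W x (ζ ω) ω ∂P ≤
      (|x| + 2 * |θ|) + σ * (√(8 * tc μ (T - t)) + 8 * tc μ (T - t) / √(8 * tc μ (T - t))) := by
  have hUpos : 0 < tc μ (T - t) := by
    rw [tc]
    apply div_pos _ (by positivity)
    rw [sub_pos]
    have h5 := Real.add_one_le_exp (2 * μ * (T - t))
    nlinarith
  set U : ℝ := tc μ (T - t)
  set K : ℝ := |x| + 2 * |θ| with hK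
  set C2 : ℝ := √(8 * U) + 8 * U / √(8 * U) with hC2
  have hKnn : 0 ≤ K := by rw [hK]; positivity
  have hC2nn : 0 ≤ C2 := by rw [hC2]; positivity
  have hCnn : 0 ≤ K + σ * C2 := by positivity
  set f : Ω → ℝ := fun ω => exp (-(r * ζ ω)) * X μ σ θ W x (ζ ω) ω with hf
  by_cases hfint : Integrable f P
  swap
  · rw [integral_undef hfint]
    exact hCnn
  have hbound : ∀ᵐ ω ∂P, |f ω| ≤ K + σ * |W (tc μ (ζ ω)) ω| := by
    filter_upwards [hζae] with ω hω
    obtain ⟨hζ0, hζT⟩ := hω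
    have he1 : (0:ℝ) < exp (-(μ * ζ ω)) := Real.exp_pos _
    have he2 : exp (-(μ * ζ ω)) ≤ 1 := by
      rw [show (1:ℝ) = exp 0 from Real.exp_zero.symm]
      exact Real.exp_le_exp.mpr (by nlinarith)
    have he3 : exp (-(r * ζ ω)) ≤ 1 := by
      rw [show (1:ℝ) = exp 0 from Real.exp_zero.symm]
      exact Real.exp_le_exp.mpr (by nlinarith)
    have he4 : (0:ℝ) < exp (-(r * ζ ω)) := Real.exp_pos _
    have hm : |mOU μ θ (ζ ω) x| ≤ |x| + |θ| := by
      rw [mOU]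
      calc |x * exp (-(μ * ζ ω)) + θ * (1 - exp (-(μ * ζ ω)))|
          ≤ |x * exp (-(μ * ζ ω))| + |θ * (1 - exp (-(μ * ζ ω)))| := abs_add_le _ _
        _ = |x| * exp (-(μ * ζ ω)) + |θ| * (1 - exp (-(μ * ζ ω))) := by
            rw [abs_mul, abs_mul, abs_of_pos he1,
              abs_of_nonneg (show (0:ℝ) ≤ 1 - exp (-(μ * ζ ω)) by linarith)]
        _ ≤ |x| * 1 + |θ| * 1 := by
            apply add_le_add
            · exact mul_le_mul_of_nonneg_left he2 (abs_nonneg _)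
            · exact mul_le_mul_of_nonneg_left (by linarith) (abs_nonneg _)
        _ = |x| + |θ| := by ring
    have hX : |X μ σ θ W x (ζ ω) ω| ≤ (|x| + |θ|) + σ * |W (tc μ (ζ ω)) ω| := by
      rw [X]
      calc |mOU μ θ (ζ ω) x + σ * exp (-(μ * ζ ω)) * W (tc μ (ζ ω)) ω|
          ≤ |mOU μ θ (ζ ω) x| + |σ * exp (-(μ * ζ ω)) * W (tc μ (ζ ω)) ω| := abs_add_le _ _
        _ ≤ (|x| + |θ|) + σ * |W (tc μ (ζ ω)) ω| := by
            apply add_le_add hm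
            rw [abs_mul, abs_mul, abs_of_pos hσ, abs_of_pos he1]
            have h9 : exp (-(μ * ζ ω)) * |W (tc μ (ζ ω)) ω| ≤ |W (tc μ (ζ ω)) ω| :=
              mul_le_of_le_one_left (abs_nonneg _) he2
            calc σ * exp (-(μ * ζ ω)) * |W (tc μ (ζ ω)) ω|
                = σ * (exp (-(μ * ζ ω)) * |W (tc μ (ζ ω)) ω|) := by ring
              _ ≤ σ * |W (tc μ (ζ ω)) ω| := mul_le_mul_of_nonneg_left h9 hσ.le
    calc |f ω| = exp (-(r * ζ ω)) * |X μ σ θ W x (ζ ω) ω| := by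
          rw [abs_mul, abs_of_pos he4]
      _ ≤ 1 * ((|x| + |θ|) + σ * |W (tc μ (ζ ω)) ω|) :=
          mul_le_mul he3 hX (abs_nonneg _) zero_le_one
      _ ≤ K + σ * |W (tc μ (ζ ω)) ω| := by
          rw [hK]
          nlinarith [abs_nonneg θ]
  have htcmem : ∀ᵐ ω ∂P, tc μ (ζ ω) ∈ Set.Icc 0 U := by
    filter_upwards [hζae] with ω hω
    exact ⟨tc_nonneg hμ hω.1, tc_mono hμ hω.2⟩
  have hae : ∀ᵐ ω ∂P, ENNReal.ofReal |f ω| ≤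
      ENNReal.ofReal K + ENNReal.ofReal σ * (⨆ n, ENNReal.ofReal (dyMax W U n ω)) := by
    filter_upwards [hbound, htcmem] with ω h1 h2
    have h3 := hW.ofReal_abs_le_iSup_dyMax hUpos h2 ω
    calc ENNReal.ofReal |f ω| ≤ ENNReal.ofReal (K + σ * |W (tc μ (ζ ω)) ω|) :=
          ENNReal.ofReal_le_ofReal h1
      _ = ENNReal.ofReal K + ENNReal.ofReal σ * ENNReal.ofReal |W (tc μ (ζ ω)) ω| := by
          rw [ENNReal.ofReal_add hKnn (by positivity), ENNReal.ofReal_mul hσ.le]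
      _ ≤ ENNReal.ofReal K + ENNReal.ofReal σ * (⨆ n, ENNReal.ofReal (dyMax W U n ω)) :=
          add_le_add_right (mul_le_mul_right h3 _) _
  have hG : Measurable fun ω => ⨆ n, ENNReal.ofReal (dyMax W U n ω) :=
    Measurable.iSup (fun n => (hW.measurable_dyMax U n).ennreal_ofReal)
  have hlint : (∫⁻ ω, ENNReal.ofReal |f ω| ∂P) ≤ ENNReal.ofReal (K + σ * C2) := by
    calc ∫⁻ ω, ENNReal.ofReal |f ω| ∂P
        ≤ ∫⁻ ω, (ENNReal.ofReal K + ENNReal.ofReal σ *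
            (⨆ n, ENNReal.ofReal (dyMax W U n ω))) ∂P := lintegral_mono_ae hae
      _ = ENNReal.ofReal K + ENNReal.ofReal σ *
            ∫⁻ ω, (⨆ n, ENNReal.ofReal (dyMax W U n ω)) ∂P := by
          rw [lintegral_add_left measurable_const, lintegral_const_mul _ hG, lintegral_const,
            measure_univ, mul_one]
      _ ≤ ENNReal.ofReal K + ENNReal.ofReal σ * ENNReal.ofReal C2 := by
          apply add_le_add_right
          exact mul_le_mul_right (hW.lintegral_iSup_dyMax_le hUpos) _
      _ = ENNReal.ofReal (K + σ * C2) := by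
          rw [← ENNReal.ofReal_mul hσ.le, ← ENNReal.ofReal_add hKnn (by positivity)]
  have hmono : ∫ ω, f ω ∂P ≤ ∫ ω, |f ω| ∂P :=
    integral_mono hfint hfint.abs (fun ω => le_abs_self _)
  have habs : ∫ ω, |f ω| ∂P = (∫⁻ ω, ENNReal.ofReal |f ω| ∂P).toReal := by
    rw [integral_eq_lintegral_of_nonneg_ae (ae_of_all _ fun ω => abs_nonneg (f ω))
      hfint.abs.aestronglyMeasurable]
  have hfin : (∫⁻ ω, ENNReal.ofReal |f ω| ∂P).toReal ≤ K + σ * C2 :=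
    ENNReal.toReal_le_of_le_ofReal hCnn hlint
  calc ∫ ω, f ω ∂P ≤ ∫ ω, |f ω| ∂P := hmono
    _ = (∫⁻ ω, ENNReal.ofReal |f ω| ∂P).toReal := habs
    _ ≤ K + σ * C2 := hfin


/-- for `t ∈ [0,T)` and `x < x* = μθ/(μ+r)`, it is not optimal to stop
immediately: `V^{1,L}(t,x) > x`. -/
theorem V1L_strict_above_payoff_below_xstar (P : Measure Ω) [IsProbabilityMeasure P]
    (μ σ θ r T : ℝ) (hμ : 0 < μ) (hσ : 0 < σ) (hr : 0 < r) (hT : 0 < T)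
    (W : ℝ → Ω → ℝ) (hW : IsStdBrownian P W)
    (t x : ℝ) (ht : t ∈ Set.Ico 0 T) (hx : x < μ * θ / (μ + r)) :
    x < V1L P μ σ θ r T W t x := by
  obtain ⟨ht0, htT⟩ := ht
  have hTt : 0 < T - t := sub_pos.mpr htT
  have hμr : 0 < μ + r := by linarith
  have hd : 0 < μ * θ - (μ + r) * x := by
    rw [lt_div_iff₀ hμr] at hx
    nlinarith
  set φ : ℝ → ℝ := fun s => exp (-(r * s)) * mOU μ θ s x with hφ
  have hφ0 : φ 0 = x := by simp [hφ, mOU]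
  have hφeq : φ = fun s => (x - θ) * exp (-((μ + r) * s)) + θ * exp (-(r * s)) := by
    funext s
    rw [hφ]
    show exp (-(r * s)) * mOU μ θ s x = _
    rw [mOU, show -((μ + r) * s) = -(μ * s) + -(r * s) by ring, Real.exp_add]
    ring
  have hexp_deriv : ∀ c : ℝ, HasDerivAt (fun s : ℝ => exp (-(c * s))) (-c) 0 := by
    intro c
    have h1 : HasDerivAt (fun s : ℝ => -(c * s)) (-c) 0 := by
      have h2 := (hasDerivAt_id (0 : ℝ)).const_mul c
      simp only [mul_one] at h2
      exact h2.neg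
    have h3 := h1.exp
    simpa using h3
  have hderiv : HasDerivAt φ (μ * θ - (μ + r) * x) 0 := by
    rw [hφeq]
    have h1 := ((hexp_deriv (μ + r)).const_mul (x - θ)).add ((hexp_deriv r).const_mul θ)
    exact h1.congr_deriv (by ring)
  have hslope : Tendsto (slope φ 0) (𝓝[≠] 0) (𝓝 (μ * θ - (μ + r) * x)) :=
    hasDerivAt_iff_tendsto_slope.mp hderiv
  have h1 : Tendsto (slope φ 0) (𝓝[>] 0) (𝓝 (μ * θ - (μ + r) * x)) :=
    hslope.mono_left (nhdsWithin_mono 0 (fun y hy => ne_of_gt hy))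
  have h2 : ∀ᶠ s in 𝓝[>] (0:ℝ), 0 < slope φ 0 s := h1.eventually (eventually_gt_nhds hd)
  have h3 : ∀ᶠ s in 𝓝[>] (0:ℝ), s ∈ Set.Ioc (0:ℝ) (T - t) :=
    Ioc_mem_nhdsGT_of_mem ⟨le_rfl, hTt⟩
  obtain ⟨s0, hs0slope, hs0mem⟩ := (h2.and h3).exists
  obtain ⟨hs0pos, hs0le⟩ := hs0mem
  have hφs0 : x < φ s0 := by
    rw [slope_def_field, hφ0, sub_zero] at hs0slope
    have h4 : 0 < (φ s0 - x) / s0 * s0 := mul_pos hs0slope hs0pos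
    rw [div_mul_cancel₀ _ (ne_of_gt hs0pos)] at h4
    linarith
  have htc0 : 0 ≤ tc μ s0 := tc_nonneg hμ hs0pos.le
  have hWint : Integrable (W (tc μ s0)) P := hW.integrable_W htc0
  have hval : ∫ ω, exp (-(r * s0)) * X μ σ θ W x s0 ω ∂P = φ s0 := by
    have hXrw : (fun ω => exp (-(r * s0)) * X μ σ θ W x s0 ω)
        = fun ω => exp (-(r * s0)) * mOU μ θ s0 x
          + (exp (-(r * s0)) * (σ * exp (-(μ * s0)))) * W (tc μ s0) ω := by
      funext ω
      rw [X]
      ring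
    rw [hXrw]
    have hadd : (∫ ω, (exp (-(r * s0)) * mOU μ θ s0 x
          + (exp (-(r * s0)) * (σ * exp (-(μ * s0)))) * W (tc μ s0) ω) ∂P)
        = (∫ _, exp (-(r * s0)) * mOU μ θ s0 x ∂P)
          + ∫ ω, (exp (-(r * s0)) * (σ * exp (-(μ * s0)))) * W (tc μ s0) ω ∂P :=
      integral_add (integrable_const _) (hWint.const_mul _)
    rw [hadd, integral_const_mul (exp (-(r * s0)) * (σ * exp (-(μ * s0)))) (fun ω => W (tc μ s0) ω),
      hW.integral_W_eq_zero htc0, mul_zero, add_zero, integral_const, probReal_univ]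
    simp [hφ]
  have hstop : IsStopTime (ouFilt μ W) (fun _ : Ω => s0) := by
    intro u
    by_cases h : s0 ≤ u
    · have he : {ω : Ω | (fun _ : Ω => s0) ω ≤ u} = Set.univ := by ext ω; simp [h]
      rw [he]
      exact @MeasurableSet.univ Ω (ouFilt μ W u)
    · have he : {ω : Ω | (fun _ : Ω => s0) ω ≤ u} = ∅ := by ext ω; simp [h]
      rw [he]
      exact @MeasurableSet.empty Ω (ouFilt μ W u)
  have hmem : φ s0 ∈ {v : ℝ | ∃ ζ : Ω → ℝ, IsStopTime (ouFilt μ W) ζ ∧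
      (∀ᵐ ω ∂P, ζ ω ∈ Set.Icc 0 (T - t)) ∧
      v = ∫ ω, exp (-(r * ζ ω)) * X μ σ θ W x (ζ ω) ω ∂P} :=
    ⟨fun _ => s0, hstop, ae_of_all _ (fun ω => ⟨hs0pos.le, hs0le⟩), hval.symm⟩
  have hbdd : BddAbove {v : ℝ | ∃ ζ : Ω → ℝ, IsStopTime (ouFilt μ W) ζ ∧
      (∀ᵐ ω ∂P, ζ ω ∈ Set.Icc 0 (T - t)) ∧
      v = ∫ ω, exp (-(r * ζ ω)) * X μ σ θ W x (ζ ω) ω ∂P} := by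
    refine ⟨(|x| + 2 * |θ|) + σ * (√(8 * tc μ (T - t)) + 8 * tc μ (T - t) / √(8 * tc μ (T - t))),
      ?_⟩
    rintro v ⟨ζ, hζstop, hζae, rfl⟩
    exact integral_payoff_le P hμ hσ hr hTt hW ζ hζae
  exact lt_csSup_of_lt hbdd hmem hφs0

end OUSpread
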